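/- Let m ≥ 1 and let γ : ℂ → ℂ^{2m} be the rational normal (moment) curve γ(t) = (1, t, t², …, t^{2m−1}), with osculating flags F•(t) given by Fᵢ(t) = span{γ(t), γ'(t), …, γ^{(i−1)}(t)}. Then there exists a nondegenerate alternating bilinear form ⟨ , ⟩ on ℂ^{2m}, whose matrix in the standard basis has real entries, such that every osculating flag is isotropic: for all t ∈ ℂ and all 0 ≤ i ≤ 2m, ∠(F_{2m−i}(t)) = Fᵢ(t), where ∠(W) denotes the annihilator of W with respect to ⟨ , ⟩. -/

import Mathlib

open Module

/-- The annihilator `∠(W) = {v ∈ V | ⟨v,w⟩ = 0 for all w ∈ W}` of a subspace `W`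
with respect to a bilinear form `B`. -/
def ann {V : Type*} [AddCommGroup V] [Module ℂ V]
    (B : LinearMap.BilinForm ℂ V) (W : Submodule ℂ V) : Submodule ℂ V :=
  W.dualAnnihilator.comap B

/-- The `j`-th (coordinatewise) derivative `γ^{(j)}(t)` of the rational normal
(moment) curve `γ : ℂ → ℂⁿ`, `γ(t) = (1, t, t², …, t^{n-1})`. -/
noncomputable def curveDeriv (n : ℕ) (j : ℕ) (t : ℂ) : Fin n → ℂ :=
  fun k => deriv^[j] (fun s : ℂ => s ^ (k : ℕ)) t

/-- The `i`-th osculating subspace `Fᵢ(t) = span{γ(t), γ'(t), …, γ^{(i-1)}(t)}`. -/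
noncomputable def oscSubspace (n : ℕ) (t : ℂ) (i : ℕ) : Submodule ℂ (Fin n → ℂ) :=
  Submodule.span ℂ (Set.range fun j : Fin i => curveDeriv n (j : ℕ) t)

lemma iterDeriv_pow (K j : ℕ) :
    deriv^[j] (fun s : ℂ => s ^ K) = fun t => (K.descFactorial j : ℂ) * t ^ (K - j) := by
  induction j with
  | zero => simp
  | succ j ih =>
    funext t
    rw [Function.iterate_succ_apply', ih]
    have : deriv (fun t : ℂ => (K.descFactorial j : ℂ) * t ^ (K - j)) t
        = (K.descFactorial j : ℂ) * (((K - j : ℕ) : ℂ) * t ^ (K - j - 1)) := by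
      rw [deriv_const_mul _ (differentiable_pow _).differentiableAt, deriv_pow_field]
    rw [this, Nat.descFactorial_succ, Nat.sub_sub]
    push_cast
    ring

lemma curveDeriv_apply (n j : ℕ) (t : ℂ) (k : Fin n) :
    curveDeriv n j t k = (Nat.descFactorial (k : ℕ) j : ℂ) * t ^ ((k : ℕ) - j) := by
  simp only [curveDeriv, iterDeriv_pow]

/-- coefficient -/
noncomputable def bc (m : ℕ) (k : Fin (2 * m)) : ℂ :=
  (-1) ^ (k : ℕ) * ((2 * m - 1).choose (k : ℕ) : ℂ)

noncomputable def Bf (m : ℕ) : LinearMap.BilinForm ℂ (Fin (2 * m) → ℂ) :=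
  LinearMap.mk₂ ℂ (fun x y => ∑ k : Fin (2 * m), bc m k * x k * y (Fin.rev k))
    (fun x x' y => by simp [add_mul, mul_add, Finset.sum_add_distrib])
    (fun c x y => by simp [Finset.mul_sum]; ring_nf; simp [mul_assoc, mul_left_comm])
    (fun x y y' => by simp [mul_add, Finset.sum_add_distrib])
    (fun c x y => by simp [Finset.mul_sum]; ring_nf; simp [mul_assoc, mul_left_comm])

lemma Bf_apply (m : ℕ) (x y : Fin (2 * m) → ℂ) :
    Bf m x y = ∑ k : Fin (2 * m), bc m k * x k * y (Fin.rev k) := rfl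

lemma cast_descFactorial {k n : ℕ} (h : k ≤ n) :
    ((n.descFactorial k : ℂ)) = ((n.factorial : ℕ) : ℂ) / (((n-k).factorial : ℕ) : ℂ) := by
  have h0 : (((n - k).factorial : ℕ) : ℂ) ≠ 0 := by
    exact_mod_cast (n - k).factorial_ne_zero
  rw [eq_div_iff h0, mul_comm]
  exact_mod_cast Nat.factorial_mul_descFactorial h

lemma term_id {n a b j : ℕ} (h1 : a + j ≤ n) :
    ((n.choose (a + j) : ℂ)) * ((a + j).descFactorial a : ℂ) * ((n - (a + j)).descFactorial b : ℂ)
      = ((n.descFactorial (a + b) : ℂ)) * (((n - (a + b)).choose j : ℂ)) := by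
  by_cases h2 : a + b + j ≤ n
  · have hab : a + b ≤ n := by omega
    have hj : j ≤ n - (a + b) := by omega
    have hb : b ≤ n - (a + j) := by omega
    rw [Nat.cast_choose ℂ h1, Nat.cast_choose ℂ hj,
      cast_descFactorial (show a ≤ a + j by omega), cast_descFactorial hb,
      cast_descFactorial hab]
    have e1 : a + j - a = j := by omega
    have e2 : n - (a + j) - b = n - (a + b) - j := by omega
    rw [e1, e2]
    have f1 : ((a + j).factorial : ℂ) ≠ 0 := by exact_mod_cast (a + j).factorial_ne_zero
    have f2 : ((n - (a + j)).factorial : ℂ) ≠ 0 := by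
      exact_mod_cast (n - (a + j)).factorial_ne_zero
    have f3 : ((j).factorial : ℂ) ≠ 0 := by exact_mod_cast (j).factorial_ne_zero
    have f4 : ((n - (a + b) - j).factorial : ℂ) ≠ 0 := by
      exact_mod_cast (n - (a + b) - j).factorial_ne_zero
    have f5 : ((n - (a + b)).factorial : ℂ) ≠ 0 := by
      exact_mod_cast (n - (a + b)).factorial_ne_zero
    field_simp
  · have hz1 : (n - (a + j)).descFactorial b = 0 :=
      Nat.descFactorial_eq_zero_iff_lt.2 (by omega)
    rw [hz1]
    by_cases hab : a + b ≤ n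
    · have hz2 : (n - (a + b)).choose j = 0 := Nat.choose_eq_zero_of_lt (by omega)
      rw [hz2]; simp
    · have hz3 : n.descFactorial (a + b) = 0 := Nat.descFactorial_eq_zero_iff_lt.2 (by omega)
      rw [hz3]; simp

lemma key_lt {n a b : ℕ} (h : a + b < n) :
    ∑ k ∈ Finset.range (n + 1),
      ((-1 : ℂ)) ^ k * (n.choose k : ℂ) * (k.descFactorial a : ℂ) * ((n - k).descFactorial b : ℂ)
      = 0 := by
  set f : ℕ → ℂ := fun k =>
    ((-1 : ℂ)) ^ k * (n.choose k : ℂ) * (k.descFactorial a : ℂ) * ((n - k).descFactorial b : ℂ)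
  have hsub : Finset.Ico a (n + 1) ⊆ Finset.range (n + 1) := by
    rw [Finset.range_eq_Ico]; exact Finset.Ico_subset_Ico (by omega) le_rfl
  have h1 : ∑ k ∈ Finset.range (n + 1), f k = ∑ k ∈ Finset.Ico a (n + 1), f k := by
    refine (Finset.sum_subset hsub ?_).symm
    intro k hk hk2
    have : k < a := by
      simp only [Finset.mem_range] at hk
      simp only [Finset.mem_Ico] at hk2
      omega
    have : k.descFactorial a = 0 := Nat.descFactorial_eq_zero_iff_lt.2 this
    simp [f, this]
  rw [h1, Finset.sum_Ico_eq_sum_range]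
  have h2 : ∀ j ∈ Finset.range (n + 1 - a), f (a + j)
      = ((-1 : ℂ)) ^ a * (n.descFactorial (a + b) : ℂ) *
        (((-1 : ℂ)) ^ j * (((n - (a + b)).choose j : ℂ))) := by
    intro j hj
    simp only [Finset.mem_range] at hj
    have tid := term_id (n := n) (a := a) (b := b) (j := j) (show a + j ≤ n by omega)
    simp only [f]
    linear_combination ((-1 : ℂ)) ^ a * ((-1 : ℂ)) ^ j * tid
  rw [Finset.sum_congr rfl h2, ← Finset.mul_sum]
  set N := n - (a + b) with hN
  have hNpos : N ≠ 0 := by omega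
  have h3 : ∑ j ∈ Finset.range (n + 1 - a), ((-1 : ℂ)) ^ j * ((N.choose j : ℂ))
      = ∑ j ∈ Finset.range (N + 1), ((-1 : ℂ)) ^ j * ((N.choose j : ℂ)) := by
    refine (Finset.sum_subset ?_ ?_).symm
    · apply Finset.range_subset_range.2; omega
    · intro j hj hj2
      simp only [Finset.mem_range] at hj hj2
      have : N.choose j = 0 := Nat.choose_eq_zero_of_lt (by omega)
      simp [this]
  rw [h3]
  have := Int.alternating_sum_range_choose_of_ne hNpos
  have : ((∑ i ∈ Finset.range (N + 1), (-1 : ℤ) ^ i * (N.choose i : ℤ) : ℤ) : ℂ) = 0 := by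
    rw [this]; simp
  push_cast at this
  rw [this]
  ring

lemma key_term_zero {n a b k : ℕ} (hk : k ≤ n) (h : n < a + b) :
    (k.descFactorial a : ℂ) * ((n - k).descFactorial b : ℂ) = 0 := by
  by_cases hka : a ≤ k
  · have : (n - k).descFactorial b = 0 := Nat.descFactorial_eq_zero_iff_lt.2 (by omega)
    rw [this]; simp
  · have : k.descFactorial a = 0 := Nat.descFactorial_eq_zero_iff_lt.2 (by omega)
    rw [this]; simp

lemma Bvv (m : ℕ) (hm : 1 ≤ m) (t : ℂ) (a b : ℕ) :
    Bf m (curveDeriv (2 * m) a t) (curveDeriv (2 * m) b t)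
      = if a + b = 2 * m - 1 then (-1 : ℂ) ^ a * (((2 * m - 1).factorial : ℕ) : ℂ) else 0 := by
  set n : ℕ := 2 * m - 1 with hn
  have h2m : 2 * m = n + 1 := by omega
  -- rewrite each term
  have hterm : ∀ k : Fin (2 * m),
      bc m k * curveDeriv (2 * m) a t k * curveDeriv (2 * m) b t (Fin.rev k)
        = (-1 : ℂ) ^ (k : ℕ) * (n.choose (k : ℕ) : ℂ)
          * (((k : ℕ).descFactorial a : ℂ) * t ^ ((k : ℕ) - a))
          * (((n - (k : ℕ)).descFactorial b : ℂ) * t ^ ((n - (k : ℕ)) - b)) := by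
    intro k
    have hrev : ((Fin.rev k : Fin (2 * m)) : ℕ) = n - (k : ℕ) := by
      rw [Fin.val_rev]; omega
    simp only [curveDeriv_apply, hrev, bc, ← hn]
  rw [Bf_apply, Finset.sum_congr rfl (fun k _ => hterm k)]
  rcases lt_trichotomy (a + b) n with hlt | heq | hgt
  · -- case a + b < n : factor t-power, use key_lt
    rw [if_neg (by omega)]
    have hterm2 : ∀ k : Fin (2 * m),
        (-1 : ℂ) ^ (k : ℕ) * (n.choose (k : ℕ) : ℂ)
          * (((k : ℕ).descFactorial a : ℂ) * t ^ ((k : ℕ) - a))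
          * (((n - (k : ℕ)).descFactorial b : ℂ) * t ^ ((n - (k : ℕ)) - b))
        = ((-1 : ℂ) ^ (k : ℕ) * (n.choose (k : ℕ) : ℂ) * ((k : ℕ).descFactorial a : ℂ)
            * ((n - (k : ℕ)).descFactorial b : ℂ)) * t ^ (n - a - b) := by
      intro k
      set K := (k : ℕ) with hK
      have hKn : K ≤ n := by have := k.isLt; omega
      by_cases hka : a ≤ K
      · by_cases hkb : b ≤ n - K
        · have he : (K - a) + ((n - K) - b) = n - a - b := by omega
          rw [← he, pow_add]
          ring
        · have : (n - K).descFactorial b = 0 := Nat.descFactorial_eq_zero_iff_lt.2 (by omega)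
          rw [this]; simp
      · have : K.descFactorial a = 0 := Nat.descFactorial_eq_zero_iff_lt.2 (by omega)
        rw [this]; simp
    rw [Finset.sum_congr rfl (fun k _ => hterm2 k), ← Finset.sum_mul]
    have hsum : ∑ k : Fin (2 * m),
        ((-1 : ℂ) ^ (k : ℕ) * (n.choose (k : ℕ) : ℂ) * ((k : ℕ).descFactorial a : ℂ)
          * ((n - (k : ℕ)).descFactorial b : ℂ))
        = ∑ k ∈ Finset.range (n + 1),
            ((-1 : ℂ) ^ k * (n.choose k : ℂ) * (k.descFactorial a : ℂ)
              * ((n - k).descFactorial b : ℂ)) := by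
      rw [← h2m]
      exact Fin.sum_univ_eq_sum_range (fun K => (-1 : ℂ) ^ K * (n.choose K : ℂ)
        * (K.descFactorial a : ℂ) * ((n - K).descFactorial b : ℂ)) (2 * m)
    rw [hsum, key_lt hlt, zero_mul]
  · -- case a + b = n : single term
    rw [if_pos heq]
    have ha2 : a < 2 * m := by omega
    have hside : ∀ k : Fin (2 * m), k ∈ Finset.univ → k ≠ (⟨a, ha2⟩ : Fin (2 * m)) →
        (-1 : ℂ) ^ (k : ℕ) * (n.choose (k : ℕ) : ℂ)
          * (((k : ℕ).descFactorial a : ℂ) * t ^ ((k : ℕ) - a))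
          * (((n - (k : ℕ)).descFactorial b : ℂ) * t ^ ((n - (k : ℕ)) - b)) = 0 := by
      intro k _ hne
      have hKa : (k : ℕ) ≠ a := fun hc => hne (Fin.ext hc)
      rcases Nat.lt_or_ge (k : ℕ) a with hlt2 | hge2
      · have : (k : ℕ).descFactorial a = 0 := Nat.descFactorial_eq_zero_iff_lt.2 hlt2
        rw [this]; simp
      · have hka : a < (k : ℕ) := by omega
        have : (n - (k : ℕ)).descFactorial b = 0 :=
          Nat.descFactorial_eq_zero_iff_lt.2 (by have := k.isLt; omega)
        rw [this]; simp
    rw [Finset.sum_eq_single_of_mem (⟨a, ha2⟩ : Fin (2 * m)) (Finset.mem_univ _) hside]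
    have hna : n - a = b := by omega
    simp only [hna]
    rw [Nat.descFactorial_self, Nat.descFactorial_self]
    simp only [Nat.sub_self, pow_zero]
    have hcm := Nat.choose_mul_factorial_mul_factorial (show a ≤ n by omega)
    rw [hna] at hcm
    have hcast : ((n.choose a : ℕ) : ℂ) * (a.factorial : ℂ) * (b.factorial : ℂ)
        = ((n.factorial : ℕ) : ℂ) := by exact_mod_cast hcm
    linear_combination ((-1 : ℂ)) ^ a * hcast
  · -- case a + b > n : all terms vanish
    rw [if_neg (by omega)]
    apply Finset.sum_eq_zero
    intro k _
    have hKn : (k : ℕ) ≤ n := by have := k.isLt; omega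
    have := key_term_zero (a := a) (b := b) hKn hgt
    calc (-1 : ℂ) ^ (k : ℕ) * (n.choose (k : ℕ) : ℂ)
          * (((k : ℕ).descFactorial a : ℂ) * t ^ ((k : ℕ) - a))
          * (((n - (k : ℕ)).descFactorial b : ℂ) * t ^ ((n - (k : ℕ)) - b))
        = ((k : ℕ).descFactorial a : ℂ) * ((n - (k : ℕ)).descFactorial b : ℂ)
          * ((-1 : ℂ) ^ (k : ℕ) * (n.choose (k : ℕ) : ℂ) * t ^ ((k : ℕ) - a)
            * t ^ ((n - (k : ℕ)) - b)) := by ring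
      _ = 0 := by rw [this, zero_mul]

lemma factorial_cast_ne (n : ℕ) : (((n.factorial : ℕ) : ℂ)) ≠ 0 := by
  exact_mod_cast n.factorial_ne_zero

lemma Bf_sum_left {ι : Type*} (m : ℕ) (s : Finset ι) (c : ι → ℂ)
    (u : ι → (Fin (2 * m) → ℂ)) (w : Fin (2 * m) → ℂ) :
    Bf m (∑ a ∈ s, c a • u a) w = ∑ a ∈ s, c a * Bf m (u a) w := by
  simp [map_sum, LinearMap.sum_apply, map_smul, LinearMap.smul_apply, smul_eq_mul]

lemma curveDeriv_li (m : ℕ) (hm : 1 ≤ m) (t : ℂ) :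
    LinearIndependent ℂ (fun j : Fin (2 * m) => curveDeriv (2 * m) (j : ℕ) t) := by
  rw [Fintype.linearIndependent_iff]
  intro g hg i
  set n : ℕ := 2 * m - 1 with hn
  have hi := i.isLt
  have hj : n - (i : ℕ) < 2 * m := by omega
  have h0 : Bf m (∑ a : Fin (2 * m), g a • curveDeriv (2 * m) (a : ℕ) t)
      (curveDeriv (2 * m) (n - (i : ℕ)) t) = 0 := by rw [hg]; simp
  rw [Bf_sum_left] at h0
  have hone : ∀ a : Fin (2 * m), a ∈ Finset.univ → a ≠ i →
      g a * Bf m (curveDeriv (2 * m) (a : ℕ) t) (curveDeriv (2 * m) (n - (i : ℕ)) t) = 0 := by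
    intro a _ hne
    rw [Bvv m hm t, if_neg, mul_zero]
    have : (a : ℕ) ≠ (i : ℕ) := fun hc => hne (Fin.ext hc)
    have := a.isLt
    omega
  rw [Finset.sum_eq_single_of_mem i (Finset.mem_univ _) hone, Bvv m hm t,
    if_pos (by omega)] at h0
  rcases mul_eq_zero.mp h0 with h | h
  · exact h
  · exfalso
    rcases mul_eq_zero.mp h with h' | h'
    · exact (pow_ne_zero _ (neg_ne_zero.mpr one_ne_zero)) h'
    · exact factorial_cast_ne _ h'

noncomputable def curveBasis (m : ℕ) (hm : 1 ≤ m) (t : ℂ) :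
    Basis (Fin (2 * m)) ℂ (Fin (2 * m) → ℂ) :=
  haveI : Nonempty (Fin (2 * m)) := ⟨⟨0, by omega⟩⟩
  basisOfLinearIndependentOfCardEqFinrank (curveDeriv_li m hm t)
    (by simp [Module.finrank_fintype_fun_eq_card])

lemma curveBasis_apply (m : ℕ) (hm : 1 ≤ m) (t : ℂ) (a : Fin (2 * m)) :
    curveBasis m hm t a = curveDeriv (2 * m) (a : ℕ) t := by
  haveI : Nonempty (Fin (2 * m)) := ⟨⟨0, by omega⟩⟩
  rw [curveBasis, coe_basisOfLinearIndependentOfCardEqFinrank]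

lemma bc_ne_zero (m : ℕ) (k : Fin (2 * m)) : bc m k ≠ 0 := by
  have hk : (k : ℕ) ≤ 2 * m - 1 := by have := k.isLt; omega
  apply mul_ne_zero
  · exact pow_ne_zero _ (neg_ne_zero.mpr one_ne_zero)
  · exact_mod_cast (Nat.choose_pos hk).ne'

lemma bc_rev (m : ℕ) (hm : 1 ≤ m) (k : Fin (2 * m)) : bc m (Fin.rev k) = - bc m k := by
  set n : ℕ := 2 * m - 1 with hn
  have hk : (k : ℕ) ≤ n := by have := k.isLt; omega
  have hrev : ((Fin.rev k : Fin (2 * m)) : ℕ) = n - (k : ℕ) := by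
    rw [Fin.val_rev]; omega
  have hch : (2 * m - 1).choose (n - (k : ℕ)) = (2 * m - 1).choose (k : ℕ) :=
    Nat.choose_symm hk
  have h1 : ((-1 : ℂ)) ^ (n - (k : ℕ)) * ((-1 : ℂ)) ^ (k : ℕ) = ((-1 : ℂ)) ^ n := by
    rw [← pow_add]; congr 1; omega
  have h2 : ((-1 : ℂ)) ^ (k : ℕ) * ((-1 : ℂ)) ^ (k : ℕ) = 1 := by
    rw [← pow_add, ← two_mul, pow_mul]; norm_num
  have hodd : Odd n := ⟨m - 1, by omega⟩
  have h3 : ((-1 : ℂ)) ^ n = -1 := hodd.neg_one_pow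
  have h4 : ((-1 : ℂ)) ^ (n - (k : ℕ)) = -((-1 : ℂ)) ^ (k : ℕ) := by
    have := h1
    rw [h3] at this
    calc ((-1 : ℂ)) ^ (n - (k : ℕ))
        = ((-1 : ℂ)) ^ (n - (k : ℕ)) * (((-1 : ℂ)) ^ (k : ℕ) * ((-1 : ℂ)) ^ (k : ℕ)) := by
          rw [h2, mul_one]
      _ = (((-1 : ℂ)) ^ (n - (k : ℕ)) * ((-1 : ℂ)) ^ (k : ℕ)) * ((-1 : ℂ)) ^ (k : ℕ) := by ring
      _ = -((-1 : ℂ)) ^ (k : ℕ) := by rw [this]; ring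
  simp only [bc, hrev, hch, h4]
  ring

lemma Bf_isAlt (m : ℕ) (hm : 1 ≤ m) : (Bf m).IsAlt := by
  intro x
  rw [Bf_apply]
  set S := ∑ k : Fin (2 * m), bc m k * x k * x (Fin.rev k) with hS
  have hrev : S = ∑ k : Fin (2 * m), bc m (Fin.rev k) * x (Fin.rev k) * x k := by
    rw [hS]
    exact Fintype.sum_bijective Fin.rev Fin.rev_bijective _ _
      (fun k => by rw [Fin.rev_rev])
  have hneg : S = -S := by
    nth_rewrite 1 [hrev]
    rw [← Finset.sum_neg_distrib]
    apply Finset.sum_congr rfl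
    intro k _
    rw [bc_rev m hm k]
    ring
  have h2 : S + S = 0 := by linear_combination hneg
  have h3 : (2 : ℂ) * S = 0 := by linear_combination h2
  rcases mul_eq_zero.mp h3 with h | h
  · norm_num at h
  · exact h

lemma Bf_nondegenerate (m : ℕ) : (Bf m).Nondegenerate := by
  refine ⟨fun x hx => ?_, fun x hx => ?_⟩
  funext k
  have h := hx (Pi.single (Fin.rev k) 1)
  rw [Bf_apply] at h
  have hone : ∀ k' : Fin (2 * m), k' ∈ Finset.univ → k' ≠ k →
      bc m k' * x k' * (Pi.single (Fin.rev k) 1 : Fin (2 * m) → ℂ) (Fin.rev k') = 0 := by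
    intro k' _ hne
    have : Fin.rev k' ≠ Fin.rev k := fun hc => hne (Fin.rev_injective hc)
    rw [Pi.single_apply, if_neg this, mul_zero]
  rw [Finset.sum_eq_single_of_mem k (Finset.mem_univ _) hone, Pi.single_apply,
    if_pos rfl, mul_one] at h
  exact (mul_eq_zero.mp h).resolve_left (bc_ne_zero m k)
  funext k
  have h := hx (Pi.single (Fin.rev k) 1)
  rw [Bf_apply] at h
  have hone : ∀ k' : Fin (2 * m), k' ∈ Finset.univ → k' ≠ Fin.rev k →
      bc m k' * (Pi.single (Fin.rev k) 1 : Fin (2 * m) → ℂ) k' * x (Fin.rev k') = 0 := by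
    intro k' _ hne
    rw [Pi.single_apply, if_neg hne, mul_zero, zero_mul]
  rw [Finset.sum_eq_single_of_mem (Fin.rev k) (Finset.mem_univ _) hone, Pi.single_apply,
    if_pos rfl, mul_one, Fin.rev_rev] at h
  exact (mul_eq_zero.mp h).resolve_left (bc_ne_zero m _)

lemma Bf_real (m : ℕ) (k l : Fin (2 * m)) :
    (Bf m (Pi.single k 1) (Pi.single l 1)).im = 0 := by
  rw [Bf_apply]
  have hone : ∀ k' : Fin (2 * m), k' ∈ Finset.univ → k' ≠ k →
      bc m k' * (Pi.single k 1 : Fin (2 * m) → ℂ) k' * (Pi.single l 1 : Fin (2 * m) → ℂ) (Fin.rev k') = 0 := by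
    intro k' _ hne
    rw [Pi.single_apply, if_neg hne]
    ring
  rw [Finset.sum_eq_single_of_mem k (Finset.mem_univ _) hone, Pi.single_apply, if_pos rfl,
    mul_one, Pi.single_apply]
  have hreal : bc m k = ((((-1 : ℝ) ^ (k : ℕ) * ((2 * m - 1).choose (k : ℕ) : ℝ)) : ℝ) : ℂ) := by
    rw [bc]; push_cast; ring
  split_ifs with hif
  · rw [mul_one, hreal, Complex.ofReal_im]
  · rw [mul_zero]; rfl

lemma osc_flag (m : ℕ) (hm : 1 ≤ m) (t : ℂ) (i : ℕ) (hi : i ≤ 2 * m) :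
    ann (Bf m) (oscSubspace (2 * m) t (2 * m - i)) = oscSubspace (2 * m) t i := by
  set n : ℕ := 2 * m - 1 with hn
  apply le_antisymm
  · -- ann ≤ osc i
    intro x hx
    set cb := curveBasis m hm t with hcb
    have hxe := cb.sum_repr x
    have hx0 : ∀ a : Fin (2 * m), i ≤ (a : ℕ) → cb.repr x a = 0 := by
      intro a ha
      have hai : (a : ℕ) < 2 * m := a.isLt
      have hjlt : n - (a : ℕ) < 2 * m - i := by omega
      have hj2 : n - (a : ℕ) < 2 * m := by omega
      have hmem : curveDeriv (2 * m) (n - (a : ℕ)) t ∈ oscSubspace (2 * m) t (2 * m - i) :=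
        Submodule.subset_span ⟨⟨n - (a : ℕ), hjlt⟩, rfl⟩
      have h0 : Bf m x (curveDeriv (2 * m) (n - (a : ℕ)) t) = 0 := by
        simp only [ann, Submodule.mem_comap, Submodule.mem_dualAnnihilator] at hx
        exact hx _ hmem
      rw [← hxe, Bf_sum_left] at h0
      have hone : ∀ a' : Fin (2 * m), a' ∈ Finset.univ → a' ≠ a →
          cb.repr x a' * Bf m (cb a') (curveDeriv (2 * m) (n - (a : ℕ)) t) = 0 := by
        intro a' _ hne
        rw [curveBasis_apply, Bvv m hm t, if_neg, mul_zero]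
        have : (a' : ℕ) ≠ (a : ℕ) := fun hc => hne (Fin.ext hc)
        have := a'.isLt
        omega
      rw [Finset.sum_eq_single_of_mem a (Finset.mem_univ _) hone, curveBasis_apply,
        Bvv m hm t, if_pos (by omega)] at h0
      rcases mul_eq_zero.mp h0 with h | h
      · exact h
      · exfalso
        rcases mul_eq_zero.mp h with h' | h'
        · exact (pow_ne_zero _ (neg_ne_zero.mpr one_ne_zero)) h'
        · exact factorial_cast_ne _ h'
    rw [← hxe]
    apply Submodule.sum_mem
    intro a _
    by_cases hai : (a : ℕ) < i
    · apply Submodule.smul_mem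
      apply Submodule.subset_span
      exact ⟨⟨(a : ℕ), hai⟩, by rw [curveBasis_apply]⟩
    · rw [hx0 a (by omega), zero_smul]
      exact Submodule.zero_mem _
  · -- osc i ≤ ann
    rw [oscSubspace, Submodule.span_le]
    rintro _ ⟨j, rfl⟩
    have hj := j.isLt
    simp only [SetLike.mem_coe, ann, Submodule.mem_comap, Submodule.mem_dualAnnihilator]
    intro w hw
    have hker : oscSubspace (2 * m) t (2 * m - i)
        ≤ LinearMap.ker (Bf m (curveDeriv (2 * m) (j : ℕ) t)) := by
      rw [oscSubspace, Submodule.span_le]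
      rintro _ ⟨k, rfl⟩
      have hk := k.isLt
      simp only [SetLike.mem_coe, LinearMap.mem_ker]
      rw [Bvv m hm t, if_neg (by omega)]
    exact hker hw

theorem stmt11 (m : ℕ) (hm : 1 ≤ m) :
    ∃ B : LinearMap.BilinForm ℂ (Fin (2 * m) → ℂ), B.IsAlt ∧ B.Nondegenerate ∧
      (∀ k l : Fin (2 * m), (B (Pi.single k 1) (Pi.single l 1)).im = 0) ∧
      ∀ (t : ℂ) (i : ℕ), i ≤ 2 * m →
        ann B (oscSubspace (2 * m) t (2 * m - i)) = oscSubspace (2 * m) t i := by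
  exact ⟨Bf m, Bf_isAlt m hm, Bf_nondegenerate m, Bf_real m, fun t i hi => osc_flag m hm t i hi⟩
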